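/- Let η and η' be scales with η < η' (i.e. lim_ω η_n/η'_n = 0). Then for every sequence z : ℕ → ℂ, if lim_ω |z_n|^{η'_n} < ∞ then lim_ω |z_n|^{η_n} ≤ 1; and this containment is strict: the sequence w_n = exp(1/√(η_n η'_n)) satisfies lim_ω w_n^{η_n} = 1 (hence ≤ 1) while lim_ω w_n^{η'_n} = ∞. -/

import Mathlib

open Filter

/-- The ω-limit of a sequence in the compact space `[0,∞]`; for an ultrafilter this
equals the `limsup` along the ultrafilter. -/
noncomputable def limw (ω : Ultrafilter ℕ) (a : ℕ → ENNReal) : ENNReal :=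
  Filter.limsup a (ω : Filter ℕ)

/-- `lim_ω |z_n|^{η_n}` viewed in `[0,∞]`. -/
noncomputable def limNorm (ω : Ultrafilter ℕ) (η : ℕ → ℝ) (z : ℕ → ℂ) : ENNReal :=
  limw ω (fun n => ENNReal.ofReal (‖z n‖ ^ η n))

/-- A scale is a sequence with values in `(0,1]`. -/
def IsScale (η : ℕ → ℝ) : Prop := ∀ n, 0 < η n ∧ η n ≤ 1

/-- `lim_ω η_n / η'_n` in `[0,∞]`. -/
noncomputable def scaleRatio (ω : Ultrafilter ℕ) (η η' : ℕ → ℝ) : ENNReal :=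
  limw ω (fun n => ENNReal.ofReal (η n / η' n))

/-- `η ≤ η'` iff `lim_ω η_n/η'_n < ∞`. -/
def ScaleLE (ω : Ultrafilter ℕ) (η η' : ℕ → ℝ) : Prop := scaleRatio ω η η' ≠ ⊤

/-- `η < η'` iff `lim_ω η_n/η'_n = 0`. -/
def ScaleLT (ω : Ultrafilter ℕ) (η η' : ℕ → ℝ) : Prop := scaleRatio ω η η' = 0

/-- A scale is non-trivial if `lim_ω ε_n = 0`. -/
def NontrivialScale (ω : Ultrafilter ℕ) (ε : ℕ → ℝ) : Prop :=
  limw ω (fun n => ENNReal.ofReal (ε n)) = 0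

/-- Two scales are equivalent if `C⁻¹ η_n ≤ η'_n ≤ C η_n` ω-almost surely for some `C > 1`. -/
def ScaleEquiv (ω : Ultrafilter ℕ) (η η' : ℕ → ℝ) : Prop :=
  ∃ C : ℝ, 1 < C ∧ {n | C⁻¹ * η n ≤ η' n ∧ η' n ≤ C * η n} ∈ ω

lemma aux_tend0 (ω : Ultrafilter ℕ) (η η' : ℕ → ℝ) (hη : IsScale η) (hη' : IsScale η')
    (hlt : ScaleLT ω η η') : Tendsto (fun n => η n / η' n) (ω : Filter ℕ) (nhds 0) := by
  have h1 : Tendsto (fun n => ENNReal.ofReal (η n / η' n)) (ω : Filter ℕ) (nhds 0) := by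
    apply tendsto_of_liminf_eq_limsup ?_ hlt
    exact le_antisymm (hlt ▸ liminf_le_limsup) zero_le
  have h2 := (ENNReal.tendsto_toReal (a := 0) (by simp)).comp h1
  simp only [ENNReal.toReal_zero] at h2
  convert h2 using 2 with n
  exact (ENNReal.toReal_ofReal (div_nonneg (hη n).1.le (hη' n).1.le)).symm

lemma part1 (ω : Ultrafilter ℕ) (η η' : ℕ → ℝ) (hη : IsScale η) (hη' : IsScale η')
    (hlt : ScaleLT ω η η') (z : ℕ → ℂ) (hz : limNorm ω η' z ≠ ⊤) :
    limNorm ω η z ≤ 1 := by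
  have ht := aux_tend0 ω η η' hη hη' hlt
  set M : ℝ := (limNorm ω η' z).toReal with hM
  have hM0 : 0 ≤ M := ENNReal.toReal_nonneg
  set c : ℝ := M + 2 with hc
  have hc1 : 1 < c := by linarith
  have hlim : limNorm ω η' z < ENNReal.ofReal c := by
    rw [← ENNReal.ofReal_toReal hz]
    exact ENNReal.ofReal_lt_ofReal_iff (by linarith) |>.2 (by linarith)
  have hev : ∀ᶠ n in (ω : Filter ℕ), ‖z n‖ ^ η' n < c := by
    filter_upwards [Filter.eventually_lt_of_limsup_lt hlim] with n hn
    have := (ENNReal.ofReal_lt_ofReal_iff (by linarith)).1 hn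
    exact this
  -- show limsup ≤ ofReal (1+ε) for all ε>0
  have key : ∀ ε : ℝ, 0 < ε → limNorm ω η z ≤ ENNReal.ofReal (1 + ε) := by
    intro ε hε
    set δ : ℝ := Real.log (1 + ε) / Real.log c with hδ
    have hlogc : 0 < Real.log c := Real.log_pos hc1
    have hδ0 : 0 < δ := div_pos (Real.log_pos (by linarith)) hlogc
    have hcd : c ^ δ = 1 + ε := by
      rw [Real.rpow_def_of_pos (by linarith : (0:ℝ) < c), hδ]
      rw [mul_div_assoc', mul_comm, mul_div_assoc, div_self hlogc.ne', mul_one]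
      exact Real.exp_log (by linarith)
    have hevδ : ∀ᶠ n in (ω : Filter ℕ), η n / η' n < δ :=
      ht.eventually_lt_const hδ0
    refine Filter.limsup_le_of_le (by isBoundedDefault) ?_
    filter_upwards [hev, hevδ] with n h1 h2
    apply ENNReal.ofReal_le_ofReal
    rcases le_or_gt (‖z n‖) 1 with h | h
    · calc ‖z n‖ ^ η n ≤ 1 := Real.rpow_le_one (norm_nonneg _) h (hη n).1.le
        _ ≤ 1 + ε := by linarith
    · have hzn : 0 < ‖z n‖ := by linarith
      have heq : η n = η' n * (η n / η' n) := by
        rw [mul_comm, div_mul_cancel₀ _ (hη' n).1.ne']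
      calc ‖z n‖ ^ η n
          = (‖z n‖ ^ η' n) ^ (η n / η' n) := by
            rw [← Real.rpow_mul hzn.le, ← heq]
        _ ≤ c ^ (η n / η' n) := Real.rpow_le_rpow (Real.rpow_nonneg hzn.le _) h1.le
            (div_nonneg (hη n).1.le (hη' n).1.le)
        _ ≤ c ^ δ := Real.rpow_le_rpow_of_exponent_le hc1.le h2.le
        _ = 1 + ε := hcd
  -- conclude
  refine ENNReal.le_of_forall_pos_le_add fun ε hε _ => ?_
  have := key ε (by exact_mod_cast hε)
  rwa [ENNReal.ofReal_add zero_le_one ε.coe_nonneg, ENNReal.ofReal_one,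
    ENNReal.ofReal_coe_nnreal] at this

lemma sqrt_mul_aux (a b : ℝ) (ha : 0 < a) (hb : 0 < b) :
    1 / Real.sqrt (a*b) * a = Real.sqrt (a/b) := by
  have h1 := Real.sqrt_pos.2 ha
  have h2 := Real.sqrt_pos.2 hb
  rw [Real.sqrt_div ha.le, Real.sqrt_mul ha.le]
  field_simp
  nlinarith [Real.sq_sqrt ha.le]

lemma abs_exp_rpow (x y : ℝ) :
    ENNReal.ofReal (‖((Real.exp x : ℝ) : ℂ)‖ ^ y) = ENNReal.ofReal (Real.exp (x * y)) := by
  rw [Complex.norm_real, Real.norm_eq_abs, abs_of_pos (Real.exp_pos x),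
    Real.rpow_def_of_pos (Real.exp_pos x), Real.log_exp]

lemma part2 (ω : Ultrafilter ℕ) (η η' : ℕ → ℝ) (hη : IsScale η) (hη' : IsScale η')
    (hlt : ScaleLT ω η η') :
    limNorm ω η (fun n => (Real.exp (1 / Real.sqrt (η n * η' n)) : ℂ)) = 1 := by
  have ht := aux_tend0 ω η η' hη hη' hlt
  have heq : (fun n => ENNReal.ofReal (‖((Real.exp (1 / Real.sqrt (η n * η' n)) : ℝ) : ℂ)‖ ^ η n))
      = fun n => ENNReal.ofReal (Real.exp (Real.sqrt (η n / η' n))) := by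
    funext n
    rw [abs_exp_rpow, sqrt_mul_aux _ _ (hη n).1 (hη' n).1]
  show limw ω _ = 1
  unfold limw
  rw [show (fun n => ENNReal.ofReal (‖((Real.exp (1 / Real.sqrt (η n * η' n)) : ℝ) : ℂ)‖ ^ η n)) = _ from heq]
  have h1 : Tendsto (fun n => Real.sqrt (η n / η' n)) (ω : Filter ℕ) (nhds 0) := by
    have := (Real.continuous_sqrt.tendsto 0).comp ht
    simpa [Function.comp_def] using this
  have h2 : Tendsto (fun n => ENNReal.ofReal (Real.exp (Real.sqrt (η n / η' n)))) (ω : Filter ℕ) (nhds 1) := by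
    have h3 := (Real.continuous_exp.tendsto 0).comp h1
    simp only [Function.comp, Real.exp_zero] at h3
    have h4 := (ENNReal.continuous_ofReal.tendsto 1).comp h3
    simpa [Function.comp_def] using h4
  exact h2.limsup_eq

lemma part3 (ω : Ultrafilter ℕ) (η η' : ℕ → ℝ) (hη : IsScale η) (hη' : IsScale η')
    (hlt : ScaleLT ω η η') :
    limNorm ω η' (fun n => (Real.exp (1 / Real.sqrt (η n * η' n)) : ℂ)) = ⊤ := by
  have ht := aux_tend0 ω η η' hη hη' hlt
  have heq : (fun n => ENNReal.ofReal (‖((Real.exp (1 / Real.sqrt (η n * η' n)) : ℝ) : ℂ)‖ ^ η' n))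
      = fun n => ENNReal.ofReal (Real.exp (Real.sqrt (η' n / η n))) := by
    funext n
    rw [abs_exp_rpow]
    congr 2
    rw [show η n * η' n = η' n * η n from mul_comm _ _]
    exact sqrt_mul_aux _ _ (hη' n).1 (hη n).1
  show limw ω _ = ⊤
  unfold limw
  rw [show (fun n => ENNReal.ofReal (‖((Real.exp (1 / Real.sqrt (η n * η' n)) : ℝ) : ℂ)‖ ^ η' n)) = _ from heq]
  have hmem : Tendsto (fun n => η n / η' n) (ω : Filter ℕ) (nhdsWithin 0 (Set.Ioi 0)) := by
    apply tendsto_nhdsWithin_of_tendsto_nhds_of_eventually_within _ ht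
    exact Filter.Eventually.of_forall fun n => div_pos (hη n).1 (hη' n).1
  have hinv : Tendsto (fun n => (η n / η' n)⁻¹) (ω : Filter ℕ) atTop :=
    hmem.inv_tendsto_nhdsGT_zero
  have hinv' : Tendsto (fun n => η' n / η n) (ω : Filter ℕ) atTop := by
    convert hinv using 2 with n
    rw [inv_div]
  have hsq : Tendsto Real.sqrt atTop atTop := by
    have := tendsto_rpow_atTop (by norm_num : (0:ℝ) < 1/2)
    exact this.congr fun x => (Real.sqrt_eq_rpow x).symm
  have h1 : Tendsto (fun n => ENNReal.ofReal (Real.exp (Real.sqrt (η' n / η n)))) (ω : Filter ℕ) (nhds ⊤) :=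
    ENNReal.tendsto_ofReal_atTop.comp (Real.tendsto_exp_atTop.comp
      (hsq.comp hinv'))
  exact h1.limsup_eq

/-- STATEMENT 3: if `η < η'` then `lim_ω |z_n|^{η'_n} < ∞` implies `lim_ω |z_n|^{η_n} ≤ 1`,
and the containment is strict: `w_n = exp(1/√(η_n η'_n))` satisfies `lim_ω w_n^{η_n} = 1`
while `lim_ω w_n^{η'_n} = ∞`. -/
theorem stmt3 (ω : Ultrafilter ℕ) (hω : ∀ s : Set ℕ, sᶜ.Finite → s ∈ ω)
    (η η' : ℕ → ℝ) (hη : IsScale η) (hη' : IsScale η') (hlt : ScaleLT ω η η') :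
    (∀ z : ℕ → ℂ, limNorm ω η' z ≠ ⊤ → limNorm ω η z ≤ 1) ∧
    limNorm ω η (fun n => (Real.exp (1 / Real.sqrt (η n * η' n)) : ℂ)) = 1 ∧
    limNorm ω η' (fun n => (Real.exp (1 / Real.sqrt (η n * η' n)) : ℂ)) = ⊤ :=
  ⟨fun z hz => part1 ω η η' hη hη' hlt z hz, part2 ω η η' hη hη' hlt, part3 ω η η' hη hη' hlt⟩
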